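/- Let A be the max-linear coefficient matrix of a recursive max-linear model on a DAG, let i∈V and j∈an(i), and let k∈de(j)∩an(i). If a_{ij} = a_{ik} a_{kj} / a_{kk}, then every max-weighted path from j to i passing through k realizes a_{ij}; conversely, if every path j⇝i passes through k and a path through k is max-weighted, then a_{ij} = a_{ik} a_{kj}/a_{kk} provided the sub-paths j⇝k and k⇝i are max-weighted. -/

import Mathlib

open scoped BigOperators

/-- A path in the directed graph with edge relation `E` (E k i meaning edge
k → i) from `j` to `i`, represented by the list of its nodes. -/
def IsPathList {d : ℕ} (E : Fin d → Fin d → Prop) (j i : Fin d)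
    (l : List (Fin d)) : Prop :=
  l.head? = some j ∧ l.getLast? = some i ∧ l.Chain' E

/-- The weight d(p) = c_{jj}·c_{ℓ₁ℓ₀}···c_{ℓ_mℓ_{m-1}} of a path. -/
noncomputable def pathWeight {d : ℕ} (c : Fin d → Fin d → ℝ) :
    List (Fin d) → ℝ
  | [] => 1
  | x :: xs => c x x * (((x :: xs).zip xs).map fun p => c p.2 p.1).prod

/-- The max-linear coefficient a_{ij} = max over paths j ⇝ i of the path
weight (0 when no path exists). -/
noncomputable def mlCoeff {d : ℕ} (E : Fin d → Fin d → Prop)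
    (c : Fin d → Fin d → ℝ) (i j : Fin d) : ℝ :=
  sSup {w | ∃ l, IsPathList E j i l ∧ pathWeight c l = w}

section Helpers

variable {d : ℕ} {E : Fin d → Fin d → Prop} {c : Fin d → Fin d → ℝ}

lemma chain'_zip_rel : ∀ (x : Fin d) (xs : List (Fin d)), List.Chain' E (x :: xs) →
    ∀ p ∈ (x :: xs).zip xs, E p.1 p.2
  | _, [], _, p, hp => by simp at hp
  | x, y :: t, h, p, hp => by
    rw [List.zip_cons_cons] at hp
    rcases List.mem_cons.1 hp with rfl | hp
    · exact (List.isChain_cons_cons.1 h).1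
    · exact chain'_zip_rel y t (List.isChain_cons_cons.1 h).2 p hp

lemma pw_pos (hdiagpos : ∀ i, 0 < c i i) (hedgepos : ∀ i k, E k i → 0 < c i k) :
    ∀ (l : List (Fin d)), l.Chain' E → 0 < pathWeight c l
  | [], _ => by simp [pathWeight]
  | x :: xs, h => by
    rw [pathWeight]
    apply mul_pos (hdiagpos x)
    apply List.prod_pos
    intro a ha
    simp only [List.mem_map] at ha
    obtain ⟨p, hp, rfl⟩ := ha
    exact hedgepos _ _ (chain'_zip_rel x xs h p hp)

lemma chain'_transGen : ∀ (x : Fin d) (xs : List (Fin d)), List.Chain' E (x :: xs) →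
    ∀ y ∈ xs, Relation.TransGen E x y
  | _, [], _, y, hy => by simp at hy
  | x, z :: t, h, y, hy => by
    have h1 := (List.isChain_cons_cons.1 h).1
    rcases List.mem_cons.1 hy with rfl | hy
    · exact Relation.TransGen.single h1
    · exact (Relation.TransGen.single h1).trans
        (chain'_transGen z t (List.isChain_cons_cons.1 h).2 y hy)

lemma chain'_nodup (hacyc : ∀ i : Fin d, ¬ Relation.TransGen E i i) :
    ∀ l : List (Fin d), l.Chain' E → l.Nodup
  | [], _ => List.nodup_nil
  | x :: xs, h =>
    List.nodup_cons.2 ⟨fun hx => hacyc x (chain'_transGen x xs h x hx),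
      chain'_nodup hacyc xs h.tail⟩

lemma exists_path {j i : Fin d} (h : Relation.TransGen E j i) :
    ∃ l, IsPathList E j i l := by
  induction h with
  | @single b hb => exact ⟨[j, b], rfl, by simp, List.isChain_pair.2 hb⟩
  | @tail b i' _ hbc ih =>
    obtain ⟨l, h1, h2, h3⟩ := ih
    cases l with
    | nil => simp at h1
    | cons a t =>
      refine ⟨(a :: t) ++ [i'], ?_, ?_, ?_⟩
      · simpa using h1
      · rw [List.getLast?_concat]
      · refine List.isChain_append.2 ⟨h3, List.isChain_singleton _, ?_⟩
        intro x hx y hy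
        rw [h2] at hx
        simp only [Option.mem_def, Option.some.injEq, List.head?_cons] at hx hy
        subst hx; subst hy
        exact hbc

lemma S_finite (hacyc : ∀ i : Fin d, ¬ Relation.TransGen E i i) (a b : Fin d) :
    {w | ∃ l, IsPathList E b a l ∧ pathWeight c l = w}.Finite := by
  apply Set.Finite.subset ((List.finite_length_le (Fin d) d).image (pathWeight c))
  rintro w ⟨l, hl, rfl⟩
  exact ⟨l, by simpa using (chain'_nodup hacyc l hl.2.2).length_le_card, rfl⟩

lemma mlCoeff_diag (hacyc : ∀ i : Fin d, ¬ Relation.TransGen E i i) (k : Fin d) :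
    mlCoeff E c k k = c k k := by
  have hset : {w | ∃ l, IsPathList E k k l ∧ pathWeight c l = w} = {c k k} := by
    ext w
    constructor
    · rintro ⟨l, ⟨h1, h2, h3⟩, rfl⟩
      cases l with
      | nil => simp at h1
      | cons x t =>
        obtain rfl : k = x := (by simpa using h1 : x = k).symm
        cases t with
        | nil => simp [pathWeight]
        | cons y s =>
          exfalso
          have hk : k ∈ y :: s := by
            apply List.mem_of_mem_getLast? (l := y :: s)
            rw [← List.getLast?_cons_cons, h2]; rfl
          exact (List.nodup_cons.1 (chain'_nodup hacyc _ h3)).1 hk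
    · rintro rfl
      exact ⟨[k], ⟨rfl, rfl, List.isChain_singleton k⟩, by simp [pathWeight]⟩
  rw [mlCoeff, hset, csSup_singleton]

lemma pw_cons_cons (x y : Fin d) (t : List (Fin d)) :
    pathWeight c (x :: y :: t) * c y y = c x x * c y x * pathWeight c (y :: t) := by
  simp [pathWeight]; ring

lemma pw_split (hdiagpos : ∀ i, 0 < c i i) :
    ∀ (xs : List (Fin d)) (k : Fin d) (t : List (Fin d)),
      pathWeight c (xs ++ k :: t) * c k k = pathWeight c (xs ++ [k]) * pathWeight c (k :: t)
  | [], k, t => by simp [pathWeight]; ring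
  | [x], k, t => by
    have h1 := pw_cons_cons (c := c) x k t
    have h2 : pathWeight c [x, k] = c x x * (c k x * 1) := by simp [pathWeight]
    simp only [List.cons_append, List.nil_append]
    rw [h2]
    linear_combination h1
  | x :: y :: ys, k, t => by
    have ih := pw_split hdiagpos (y :: ys) k t
    have h1 := pw_cons_cons (c := c) x y (ys ++ k :: t)
    have h2 := pw_cons_cons (c := c) x y (ys ++ [k])
    simp only [List.cons_append] at ih h1 h2 ⊢
    apply mul_right_cancel₀ (hdiagpos y).ne'
    linear_combination (c k k) * h1 + (c x x * c y x) * ih - pathWeight c (k :: t) * h2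

lemma concat_path (hdiagpos : ∀ i, 0 < c i i) {j k i₀ : Fin d} {l₁ l₂ : List (Fin d)}
    (h₁ : IsPathList E j k l₁) (h₂ : IsPathList E k i₀ l₂) :
    IsPathList E j i₀ (l₁ ++ l₂.tail) ∧
      pathWeight c (l₁ ++ l₂.tail) * c k k = pathWeight c l₁ * pathWeight c l₂ := by
  obtain ⟨h1a, h1b, h1c⟩ := h₁
  obtain ⟨h2a, h2b, h2c⟩ := h₂
  cases l₂ with
  | nil => simp at h2a
  | cons x t =>
    obtain rfl : k = x := (by simpa using h2a : x = k).symm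
    cases l₁ with
    | nil => simp at h1a
    | cons a s =>
      obtain rfl : j = a := (by simpa using h1a : a = j).symm
      have hlast : (j :: s).dropLast ++ [k] = j :: s :=
        List.dropLast_append_getLast? k h1b
      simp only [List.tail_cons]
      constructor
      · refine ⟨by simp, ?_, ?_⟩
        · cases t with
          | nil =>
            simpa using h1b.trans (by simpa using h2b)
          | cons b t' =>
            rw [List.getLast?_append_cons]
            rw [← List.getLast?_cons_cons (a := k)]
            exact h2b
        · refine List.isChain_append.2 ⟨h1c, h2c.tail, ?_⟩
          intro x hx y hy
          rw [h1b] at hx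
          simp only [Option.mem_def, Option.some.injEq] at hx
          subst hx
          cases t with
          | nil => simp at hy
          | cons b t' =>
            simp only [Option.mem_def, Option.some.injEq, List.head?_cons] at hy
            subst hy
            exact (List.isChain_cons_cons.1 h2c).1
      · have := pw_split (c := c) hdiagpos ((j :: s).dropLast) k t
        rw [hlast] at this
        rw [← hlast, List.append_assoc]
        simpa [hlast] using this

end Helpers

/-- Let A be the max-linear coefficient matrix of a recursive
max-linear model on a DAG, i ∈ V, j ∈ an(i), k ∈ de(j) ∩ an(i).
(1) If a_{ij} = a_{ik}a_{kj}/a_{kk}, then any concatenation of a max-weighted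
path j ⇝ k (weight a_{kj}) with a max-weighted path k ⇝ i (weight a_{ik}) is a
path j ⇝ i through k realizing a_{ij}.
(2) Conversely, if every path j ⇝ i passes through k and max-weighted sub-paths
j ⇝ k and k ⇝ i exist, then a_{ij} = a_{ik}a_{kj}/a_{kk}. -/
theorem max_weighted_path_through_k {d : ℕ}
    (E : Fin d → Fin d → Prop) (c : Fin d → Fin d → ℝ)
    (hacyc : ∀ i, ¬ Relation.TransGen E i i)
    (hdiagpos : ∀ i, 0 < c i i)
    (hedgepos : ∀ i k, E k i → 0 < c i k)
    (i j k : Fin d)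
    (hji : Relation.TransGen E j i)
    (hjk : Relation.TransGen E j k)
    (hki : Relation.TransGen E k i) :
    ((mlCoeff E c i j = mlCoeff E c i k * mlCoeff E c k j / mlCoeff E c k k →
        ∀ l₁ l₂ : List (Fin d),
          IsPathList E j k l₁ → pathWeight c l₁ = mlCoeff E c k j →
          IsPathList E k i l₂ → pathWeight c l₂ = mlCoeff E c i k →
          IsPathList E j i (l₁ ++ l₂.tail)
            ∧ pathWeight c (l₁ ++ l₂.tail) = mlCoeff E c i j)
      ∧ ((∀ l : List (Fin d), IsPathList E j i l → k ∈ l) →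
          (∃ l₁, IsPathList E j k l₁ ∧ pathWeight c l₁ = mlCoeff E c k j) →
          (∃ l₂, IsPathList E k i l₂ ∧ pathWeight c l₂ = mlCoeff E c i k) →
          mlCoeff E c i j = mlCoeff E c i k * mlCoeff E c k j / mlCoeff E c k k)) := by
  have hkk : mlCoeff E c k k = c k k := mlCoeff_diag hacyc k
  have hckk : (0 : ℝ) < c k k := hdiagpos k
  have hle : ∀ (a b : Fin d) (l : List (Fin d)), IsPathList E b a l →
      pathWeight c l ≤ mlCoeff E c a b := fun a b l hl =>
    le_csSup (S_finite hacyc a b).bddAbove ⟨l, hl, rfl⟩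
  constructor
  · intro hyp l₁ l₂ hl₁ hw₁ hl₂ hw₂
    obtain ⟨hp, hw⟩ := concat_path (c := c) hdiagpos hl₁ hl₂
    refine ⟨hp, ?_⟩
    rw [hyp, hkk, eq_div_iff hckk.ne', ← hw₁, ← hw₂]
    linear_combination hw
  · rintro hthrough ⟨l₁, hl₁, hw₁⟩ ⟨l₂, hl₂, hw₂⟩
    rw [hkk]
    apply le_antisymm
    · -- a_ij ≤ a_ik * a_kj / c k k
      show sSup {w | ∃ l, IsPathList E j i l ∧ pathWeight c l = w} ≤ _
      apply csSup_le
      · obtain ⟨l, hl⟩ := exists_path (E := E) hji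
        exact ⟨pathWeight c l, l, hl, rfl⟩
      rintro w ⟨l, hl, rfl⟩
      have hkmem := hthrough l hl
      obtain ⟨p, q, rfl⟩ := List.append_of_mem hkmem
      have hjk' : j ≠ k := fun h => hacyc k (h ▸ hjk)
      have hki' : k ≠ i := fun h => hacyc k (h ▸ hki)
      obtain ⟨h1, h2, h3⟩ := hl
      cases p with
      | nil => exact absurd (by simpa using h1) hjk'.symm
      | cons a p' =>
        obtain rfl : j = a := (by simpa using h1 : a = j).symm
        have hsub1 : IsPathList E j k ((j :: p') ++ [k]) := by
          refine ⟨by simp, by rw [List.getLast?_concat], h3.prefix ⟨q, by simp⟩⟩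
        have hsub2 : IsPathList E k i (k :: q) := by
          refine ⟨rfl, ?_, h3.suffix ⟨j :: p', rfl⟩⟩
          rw [← List.getLast?_append_cons (j :: p') k q]
          exact h2
        have hb1 := hle k j _ hsub1
        have hb2 := hle i k _ hsub2
        have hp1 : 0 < pathWeight c ((j :: p') ++ [k]) :=
          pw_pos hdiagpos hedgepos _ hsub1.2.2
        have hp2 : 0 < pathWeight c (k :: q) :=
          pw_pos hdiagpos hedgepos _ hsub2.2.2
        have hsplit := pw_split (c := c) hdiagpos (j :: p') k q
        rw [le_div_iff₀ hckk]
        nlinarith [hsplit, hb1, hb2, hp1, hp2]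
    · -- a_ik * a_kj / c k k ≤ a_ij
      obtain ⟨hp, hw⟩ := concat_path (c := c) hdiagpos hl₁ hl₂
      have hle' := hle i j _ hp
      have heq : mlCoeff E c i k * mlCoeff E c k j / c k k
          = pathWeight c (l₁ ++ l₂.tail) := by
        rw [div_eq_iff hckk.ne', ← hw₁, ← hw₂]
        linear_combination -hw
      rw [heq]
      exact hle'
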